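/- arXiv:1808.01564 — 2 statements merged into one kernel-verified Lean document; each statement's English description precedes it below -/
import Mathlib

section
/- Let k ≥ 1 be an integer, h > 0, t₀ ∈ ℝ, and let u : ℝ → ℝ be (k+1)-times continuously differentiable on [t₀, t₀ + k²·h] with |u^{(k+1)}(s)| ≤ M for all s in [t₀, t₀ + k²·h]. Then |u′(t₀) − (1/h)·∑_{i=0}^k β_i^k u(t₀ + i²·h)| ≤ M·((k!)²/(k+1)!)·h^k, where β_0^k = −∑_{j=1}^k 1/j² and β_i^k = (−1)^{k−1}·(k!)² / (i² · ∏_{0≤j≤k, j≠i} (i² − j²)) for 1 ≤ i ≤ k. -/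
open Polynomial Set Finset


lemma contDiff_polyeval (q : ℝ[X]) (n : ℕ∞) : ContDiff ℝ n (fun x => q.eval x) := by
  induction q using Polynomial.induction_on' with
  | add p q hp hq => simpa [eval_add] using hp.add hq
  | monomial m a =>
    simpa [eval_monomial] using (contDiff_const (c := a)).mul (contDiff_id.pow m)

lemma iteratedDerivWithin_polyeval (q : ℝ[X]) {s : Set ℝ} (hs : UniqueDiffOn ℝ s)
    (n : ℕ) : ∀ x ∈ s, iteratedDerivWithin n (fun t => q.eval t) s x
      = (derivative^[n] q).eval x := by
  induction n generalizing q with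
  | zero => simp
  | succ n ih =>
    intro x hx
    rw [iteratedDerivWithin_succ', Function.iterate_succ, Function.comp_apply]
    have heq : Set.EqOn (derivWithin (fun t => q.eval t) s)
        (fun t => (derivative q).eval t) s := fun y hy =>
      Polynomial.derivWithin q (hs.uniqueDiffWithinAt hy)
    rw [iteratedDerivWithin_congr heq hx]
    exact ih (derivative q) x hx

lemma deriv_finset_prod' {ι : Type*} [DecidableEq ι] (s : Finset ι) (f : ι → ℝ[X]) :
    derivative (∏ j ∈ s, f j) = ∑ b ∈ s, (∏ j ∈ s.erase b, f j) * derivative (f b) := by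
  classical
  induction s using Finset.induction_on with
  | empty => simp
  | @insert a s' ha ih =>
    have key : ∀ b ∈ s', (∏ j ∈ (insert a s').erase b, f j) = f a * ∏ j ∈ s'.erase b, f j := by
      intro b hb
      rw [Finset.erase_insert_of_ne (by rintro rfl; exact ha hb),
        Finset.prod_insert (fun hmem => ha (Finset.mem_of_mem_erase hmem))]
    rw [Finset.prod_insert ha, derivative_mul, ih, Finset.sum_insert ha, Finset.erase_insert ha]
    refine congr_arg₂ (· + ·) (mul_comm _ _) ?_
    rw [Finset.mul_sum]
    exact Finset.sum_congr rfl fun b hb => by rw [key b hb, mul_assoc]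

lemma iterate_derivative_monic {p : ℝ[X]} {n : ℕ} (hm : p.Monic) (hd : p.natDegree = n) :
    derivative^[n] p = C ((Nat.factorial n : ℕ) : ℝ) := by
  ext m
  rw [Polynomial.coeff_iterate_derivative]
  rcases Nat.eq_zero_or_pos m with rfl | hmpos
  · simp [hd ▸ hm.coeff_natDegree, Nat.descFactorial_self]
  · have h1 : p.coeff (m + n) = 0 := by
      apply Polynomial.coeff_eq_zero_of_natDegree_lt; omega
    have h2 : (C ((Nat.factorial n : ℕ) : ℝ)).coeff m = 0 := by
      rw [Polynomial.coeff_C, if_neg (by omega)]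
    simp only [h1, smul_zero, Polynomial.coeff_C]
    rw [if_neg (by omega)]

lemma iter_rolle {a b : ℝ} (hab : a < b) (f : ℝ → ℝ) :
    ∀ (m j : ℕ) (z : ℕ → ℝ), ContDiffOn ℝ (j + m : ℕ) f (Set.Icc a b) →
    (∀ i, i < m → z i < z (i + 1)) → (∀ i, i ≤ m → z i ∈ Set.Icc a b) →
    (∀ i, i ≤ m → iteratedDerivWithin j f (Set.Icc a b) (z i) = 0) →
    ∃ ξ ∈ Set.Icc a b, iteratedDerivWithin (j + m) f (Set.Icc a b) ξ = 0 := by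
  intro m
  induction m with
  | zero =>
    intro j z _ _ hmem hz
    exact ⟨z 0, hmem 0 le_rfl, hz 0 le_rfl⟩
  | succ m IH =>
    intro j z hf hord hmem hz
    set I := Set.Icc a b
    have hI : UniqueDiffOn ℝ I := uniqueDiffOn_Icc hab
    set g := iteratedDerivWithin j f I with hg
    have hgc : ContinuousOn g I :=
      hf.continuousOn_iteratedDerivWithin (by exact_mod_cast Nat.le_add_right j (m+1)) hI
    have key : ∀ i, ∃ x, i < m + 1 →
        x ∈ Set.Ioo (z i) (z (i + 1)) ∧ iteratedDerivWithin (j + 1) f I x = 0 := by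
      intro i
      by_cases hi : i < m + 1
      · have h1 : z i < z (i + 1) := hord i hi
        have hsub : Set.Icc (z i) (z (i + 1)) ⊆ I :=
          Set.Icc_subset_Icc (hmem i (by omega)).1 (hmem (i + 1) (by omega)).2
        obtain ⟨c, hc, hc0⟩ := exists_deriv_eq_zero h1 (hgc.mono hsub)
          (by rw [hz i (by omega), hz (i + 1) (by omega)])
        refine ⟨c, fun _ => ⟨hc, ?_⟩⟩
        have hcI : I ∈ nhds c := Icc_mem_nhds
          (lt_of_le_of_lt (hmem i (by omega)).1 hc.1)
          (lt_of_lt_of_le hc.2 (hmem (i + 1) (by omega)).2)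
        rw [iteratedDerivWithin_succ, ← hg, derivWithin_of_mem_nhds hcI, hc0]
      · exact ⟨0, fun h => absurd h hi⟩
    choose w hw using key
    have := IH (j + 1) w
      (by rw [show j + 1 + m = j + (m + 1) by omega]; exact hf)
      (fun i hi => lt_trans ((hw i (by omega)).1).2 ((hw (i + 1) (by omega)).1).1)
      (fun i hi => ⟨le_of_lt (lt_of_le_of_lt (hmem i (by omega)).1 ((hw i (by omega)).1).1),
        le_of_lt (lt_of_lt_of_le ((hw i (by omega)).1).2 (hmem (i + 1) (by omega)).2)⟩)
      (fun i hi => (hw i (by omega)).2)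
    rwa [show j + 1 + m = j + (m + 1) by omega] at this
lemma eval_derivative_prod_zero {t₀ : ℝ} {s : Finset ℕ} (f : ℕ → ℝ[X]) (h0 : 0 ∈ s)
    (hz : eval t₀ (f 0) = 0) :
    eval t₀ (derivative (∏ j ∈ s, f j)) =
      (∏ j ∈ s.erase 0, eval t₀ (f j)) * eval t₀ (derivative (f 0)) := by
  rw [deriv_finset_prod', eval_finset_sum, Finset.sum_eq_single_of_mem 0 h0 ?_]
  · rw [eval_mul, eval_prod]
  · intro b hb hb0
    rw [eval_mul, eval_prod, Finset.prod_eq_zero (Finset.mem_erase.mpr ⟨Ne.symm hb0, h0⟩) hz,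
      zero_mul]

lemma range_erase_zero (k : ℕ) : (Finset.range (k + 1)).erase 0 = Finset.Icc 1 k := by
  ext x; simp only [Finset.mem_erase, Finset.mem_range, Finset.mem_Icc]; omega

lemma prod_sq_Icc (k : ℕ) : ∏ j ∈ Finset.Icc 1 k, ((j : ℝ)) ^ 2
    = ((Nat.factorial k : ℕ) : ℝ) ^ 2 := by
  have : ∏ j ∈ Finset.Icc 1 k, ((j : ℝ)) ^ 2 = (∏ j ∈ Finset.Icc 1 k, (j : ℝ)) ^ 2 :=
    Finset.prod_pow _ 2 _
  rw [this]
  congr 1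
  rw [← Nat.cast_prod]
  congr 1
  rw [show Finset.Icc 1 k = Finset.Ico 1 (k + 1) by rfl]
  exact Finset.prod_Ico_id_eq_factorial k


/-- The coefficients `β_i^k` of the non-equidistant derivative approximation:
`β_0^k = -∑_{j=1}^k 1/j²` and
`β_i^k = (-1)^(k-1)·(k!)² / (i² · ∏_{0≤j≤k, j≠i} (i² − j²))` for `1 ≤ i ≤ k`. -/
noncomputable def betaCoef (k i : ℕ) : ℝ :=
  if i = 0 then -(∑ j ∈ Finset.Icc 1 k, (1 : ℝ) / (j : ℝ) ^ 2)
  else (-1) ^ (k - 1) * ((Nat.factorial k : ℝ)) ^ 2 /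
    ((i : ℝ) ^ 2 * ∏ j ∈ (Finset.range (k + 1)).erase i, ((i : ℝ) ^ 2 - (j : ℝ) ^ 2))

section main
variable {k : ℕ} {h t₀ : ℝ}

lemma nat_sq_ne {a b : ℕ} (hab : a ≠ b) : ((a : ℝ) ^ 2 - (b : ℝ) ^ 2) ≠ 0 := by
  intro heq
  have h2 : ((a : ℝ) - b) * ((a : ℝ) + b) = 0 := by nlinarith [heq]
  have ha : (0 : ℝ) ≤ (a : ℝ) := Nat.cast_nonneg a
  have hb : (0 : ℝ) ≤ (b : ℝ) := Nat.cast_nonneg b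
  rcases mul_eq_zero.mp h2 with h3 | h3
  · exact hab (by exact_mod_cast sub_eq_zero.mp h3)
  · have h4 : (a : ℝ) = 0 := by linarith
    have h5 : (b : ℝ) = 0 := by linarith
    exact hab (by rw [show a = 0 by exact_mod_cast h4, show b = 0 by exact_mod_cast h5])

lemma eval_bD (t₀ x y : ℝ) : eval t₀ (Lagrange.basisDivisor x y) = (x - y)⁻¹ * (t₀ - y) := by
  simp [Lagrange.basisDivisor]

lemma eval_deriv_bD (t₀ x y : ℝ) : eval t₀ (derivative (Lagrange.basisDivisor x y)) = (x - y)⁻¹ := by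
  simp [Lagrange.basisDivisor]

lemma eval_deriv_basis (hk : 1 ≤ k) (hh : 0 < h) (i : ℕ) (hik : i ∈ Finset.range (k + 1)) :
    eval t₀ (derivative (Lagrange.basis (Finset.range (k + 1)) (fun j => t₀ + (j : ℝ) ^ 2 * h) i))
      = betaCoef k i / h := by
  set v : ℕ → ℝ := fun j => t₀ + (j : ℝ) ^ 2 * h with hv
  have hv0 : v 0 = t₀ := by simp [hv]
  have hvsub : ∀ a b : ℕ, v a - v b = ((a : ℝ) ^ 2 - (b : ℝ) ^ 2) * h := by
    intro a b; simp only [hv]; ring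
  have ht0v : ∀ b : ℕ, t₀ - v b = -((b : ℝ) ^ 2 * h) := by
    intro b; simp only [hv]; ring
  rcases eq_or_ne i 0 with rfl | hi0
  · -- case i = 0
    rw [Lagrange.basis, deriv_finset_prod', eval_finset_sum]
    have hterm : ∀ b ∈ (Finset.range (k + 1)).erase 0,
        eval t₀ ((∏ j ∈ ((Finset.range (k + 1)).erase 0).erase b,
            Lagrange.basisDivisor (v 0) (v j)) * derivative (Lagrange.basisDivisor (v 0) (v b)))
          = (-((b : ℝ) ^ 2 * h))⁻¹ := by
      intro b hb
      rw [eval_mul, eval_prod, eval_deriv_bD]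
      have hone : ∀ j ∈ ((Finset.range (k + 1)).erase 0).erase b,
          eval t₀ (Lagrange.basisDivisor (v 0) (v j)) = 1 := by
        intro j hj
        have hj0 : j ≠ 0 := (Finset.mem_erase.mp (Finset.mem_of_mem_erase hj)).1
        rw [eval_bD, hv0, ht0v j]
        have hjne : (j : ℝ) ≠ 0 := Nat.cast_ne_zero.mpr hj0
        have : -((j : ℝ) ^ 2 * h) ≠ 0 := neg_ne_zero.mpr (by positivity)
        exact inv_mul_cancel₀ this
      rw [Finset.prod_congr rfl hone, Finset.prod_const_one, one_mul, hv0, ht0v b]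
    rw [Finset.sum_congr rfl hterm, range_erase_zero, betaCoef, if_pos rfl]
    rw [show (-∑ j ∈ Finset.Icc 1 k, 1 / (j : ℝ) ^ 2) / h
        = ∑ j ∈ Finset.Icc 1 k, -(1 / (j : ℝ) ^ 2 / h) by
      rw [neg_div, Finset.sum_div, ← Finset.sum_neg_distrib]]
    refine Finset.sum_congr rfl fun b hb => ?_
    have hb1 : 1 ≤ b := (Finset.mem_Icc.mp hb).1
    have hbne : (b : ℝ) ≠ 0 := Nat.cast_ne_zero.mpr (by omega)
    field_simp
  · -- case i ≠ 0
    have h0mem : 0 ∈ (Finset.range (k + 1)).erase i :=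
      Finset.mem_erase.mpr ⟨Ne.symm hi0, Finset.mem_range.mpr (by omega)⟩
    rw [Lagrange.basis, eval_derivative_prod_zero _ h0mem
      (by rw [eval_bD, hv0]; simp)]
    rw [eval_deriv_bD, hvsub i 0]
    set F := ((Finset.range (k + 1)).erase i).erase 0 with hF
    have hFalt : F = ((Finset.range (k + 1)).erase 0).erase i := Finset.erase_right_comm
    have hik' : i < k + 1 := Finset.mem_range.mp hik
    have himem0 : i ∈ (Finset.range (k + 1)).erase 0 :=
      Finset.mem_erase.mpr ⟨hi0, hik⟩
    have hcardF : F.card = k - 1 := by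
      rw [hFalt, Finset.card_erase_of_mem himem0, Finset.card_erase_of_mem
        (Finset.mem_range.mpr (by omega)), Finset.card_range]
      omega
    have hfactor : ∀ j ∈ F, eval t₀ (Lagrange.basisDivisor (v i) (v j))
        = (-1) * (j : ℝ) ^ 2 * (((i : ℝ) ^ 2 - (j : ℝ) ^ 2))⁻¹ := by
      intro j hj
      have hj' := hj
      rw [hFalt] at hj'
      have hji : j ≠ i := (Finset.mem_erase.mp hj').1
      have hne : ((i : ℝ) ^ 2 - (j : ℝ) ^ 2) ≠ 0 := nat_sq_ne (Ne.symm hji)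
      rw [eval_bD, hvsub i j, ht0v j]
      field_simp
    rw [Finset.prod_congr rfl hfactor]
    have hsplit : ∏ j ∈ F, (-1) * (j : ℝ) ^ 2 * (((i : ℝ) ^ 2 - (j : ℝ) ^ 2))⁻¹
        = (-1) ^ (k - 1) * (∏ j ∈ F, (j : ℝ) ^ 2) *
          (∏ j ∈ F, ((i : ℝ) ^ 2 - (j : ℝ) ^ 2))⁻¹ := by
      rw [Finset.prod_mul_distrib, Finset.prod_mul_distrib, Finset.prod_const,
        hcardF, ← Finset.prod_inv_distrib]
    rw [hsplit]
    -- key product identities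
    have hP : (i : ℝ) ^ 2 * ∏ j ∈ F, (j : ℝ) ^ 2 = ((Nat.factorial k : ℕ) : ℝ) ^ 2 := by
      rw [hFalt, Finset.mul_prod_erase ((Finset.range (k + 1)).erase 0)
        (fun j : ℕ => ((j : ℝ)) ^ 2) himem0, range_erase_zero, prod_sq_Icc]
    have hQ : ∏ j ∈ (Finset.range (k + 1)).erase i, ((i : ℝ) ^ 2 - (j : ℝ) ^ 2)
        = (i : ℝ) ^ 2 * ∏ j ∈ F, ((i : ℝ) ^ 2 - (j : ℝ) ^ 2) := by
      rw [hF, ← Finset.mul_prod_erase ((Finset.range (k + 1)).erase i)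
        (fun j : ℕ => ((i : ℝ) ^ 2 - (j : ℝ) ^ 2)) h0mem]
      norm_num
    rw [betaCoef, if_neg hi0, hQ]
    have hine : (i : ℝ) ^ 2 ≠ 0 := by
      have : (i : ℝ) ≠ 0 := Nat.cast_ne_zero.mpr hi0
      positivity
    have hFne : ∏ j ∈ F, ((i : ℝ) ^ 2 - (j : ℝ) ^ 2) ≠ 0 := by
      refine Finset.prod_ne_zero_iff.mpr fun j hj => ?_
      have hj' := hj
      rw [hFalt] at hj'
      exact nat_sq_ne (Ne.symm ((Finset.mem_erase.mp hj').1))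
    have hhne : h ≠ 0 := ne_of_gt hh
    rw [show ((i : ℝ) ^ 2 - (0 : ℕ) ^ 2) = (i : ℝ) ^ 2 by norm_num]
    field_simp
    linear_combination hP

end main

lemma iter_deriv_add (n : ℕ) (f g : ℝ[X]) :
    derivative^[n] (f + g) = derivative^[n] f + derivative^[n] g := by
  induction n generalizing f g with
  | zero => simp
  | succ n ih =>
    rw [Function.iterate_succ_apply, Function.iterate_succ_apply,
      Function.iterate_succ_apply, derivative_add, ih]

/-- Error bound for the non-equidistant derivative approximation: if `u` is `(k+1)`-times
continuously differentiable on `[t₀, t₀ + k²·h]` with `|u⁽ᵏ⁺¹⁾| ≤ M` there, then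
`|u′(t₀) − (1/h)·∑_{i=0}^k β_i^k u(t₀ + i²·h)| ≤ M·((k!)²/(k+1)!)·h^k`. -/
theorem deriv_approx_nonequidistant_error (k : ℕ) (hk : 1 ≤ k) (h : ℝ) (hh : 0 < h)
    (t₀ M : ℝ) (u : ℝ → ℝ)
    (hu : ContDiffOn ℝ (k + 1) u (Set.Icc t₀ (t₀ + ((k : ℝ) ^ 2) * h)))
    (hM : ∀ s ∈ Set.Icc t₀ (t₀ + ((k : ℝ) ^ 2) * h),
      |iteratedDerivWithin (k + 1) u (Set.Icc t₀ (t₀ + ((k : ℝ) ^ 2) * h)) s| ≤ M) :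
    |derivWithin u (Set.Icc t₀ (t₀ + ((k : ℝ) ^ 2) * h)) t₀
        - (1 / h) * ∑ i ∈ Finset.range (k + 1), betaCoef k i * u (t₀ + ((i : ℝ) ^ 2) * h)|
      ≤ M * ((Nat.factorial k : ℝ) ^ 2 / (Nat.factorial (k + 1) : ℝ)) * h ^ k := by
  have hkR : (1 : ℝ) ≤ (k : ℝ) := by exact_mod_cast hk
  set T := t₀ + ((k : ℝ) ^ 2) * h with hT'
  set I := Set.Icc t₀ T with hIdef
  set v : ℕ → ℝ := fun j => t₀ + (j : ℝ) ^ 2 * h with hv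
  have hveq : ∀ i : ℕ, t₀ + ((i : ℝ) ^ 2) * h = v i := fun _ => rfl
  have hT : t₀ < T := by
    have : (0 : ℝ) < (k : ℝ) ^ 2 * h := by positivity
    simp only [hT']; linarith
  have hUD : UniqueDiffOn ℝ I := uniqueDiffOn_Icc hT
  have ht₀I : t₀ ∈ I := Set.left_mem_Icc.mpr hT.le
  have hmono : ∀ {a b : ℕ}, a < b → v a < v b := by
    intro a b hab
    have h1 : (a : ℝ) < b := by exact_mod_cast hab
    have h0 : (0 : ℝ) ≤ (a : ℝ) := Nat.cast_nonneg a
    have h2 : (a : ℝ) ^ 2 < (b : ℝ) ^ 2 := by nlinarith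
    simp only [hv]
    nlinarith
  have hvmem : ∀ i ≤ k, v i ∈ I := by
    intro i hi
    have h1 : (i : ℝ) ≤ k := by exact_mod_cast hi
    have h0 : (0 : ℝ) ≤ (i : ℝ) := Nat.cast_nonneg i
    constructor
    · simp only [hv]; nlinarith
    · simp only [hv, hT']
      nlinarith [mul_le_mul_of_nonneg_right (by nlinarith : (i : ℝ) ^ 2 ≤ (k : ℝ) ^ 2) hh.le]
  have hinj : Set.InjOn v (Finset.range (k + 1) : Set ℕ) := by
    intro a _ b _ hab
    by_contra hne
    refine nat_sq_ne hne ?_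
    have : ((a : ℝ) ^ 2 - (b : ℝ) ^ 2) * h = 0 := by
      simp only [hv] at hab; linarith
    rcases mul_eq_zero.mp this with h1 | h1
    · exact h1
    · exact absurd h1 hh.ne'
  set p := Lagrange.interpolate (Finset.range (k + 1)) v (fun j => u (v j)) with hp
  have hpeval : ∀ i ∈ Finset.range (k + 1), eval (v i) p = u (v i) := fun i hi =>
    Lagrange.eval_interpolate_at_node _ hinj hi
  -- the approximation sum equals p'(t₀)
  have hsum : (1 / h) * ∑ i ∈ Finset.range (k + 1), betaCoef k i * u (v i)
      = eval t₀ (derivative p) := by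
    rw [hp, Lagrange.interpolate_apply, derivative_sum, eval_finset_sum, Finset.mul_sum]
    refine Finset.sum_congr rfl fun i hi => ?_
    rw [derivative_C_mul, eval_mul, eval_C, eval_deriv_basis hk hh i hi]
    ring
  set ω := ∏ j ∈ Finset.range (k + 1), (X - C (v j)) with hω
  have hωzero : ∀ i ∈ Finset.range (k + 1), eval (v i) ω = 0 := fun i hi => by
    rw [hω, eval_prod]
    exact Finset.prod_eq_zero hi (by simp)
  have hωd : eval t₀ (derivative ω) = ∏ j ∈ Finset.Icc 1 k, -((j : ℝ) ^ 2 * h) := by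
    rw [hω, eval_derivative_prod_zero _ (Finset.mem_range.mpr (by omega)) (by simp [hv])]
    rw [show derivative (X - C (v 0)) = 1 by simp, eval_one, mul_one, range_erase_zero]
    refine Finset.prod_congr rfl fun j hj => ?_
    rw [eval_sub, eval_X, eval_C]
    simp only [hv]; ring
  have hfac : ∀ j ∈ Finset.Icc 1 k, -((j : ℝ) ^ 2 * h) ≠ 0 := by
    intro j hj
    have hj1 : 1 ≤ j := (Finset.mem_Icc.mp hj).1
    have : (j : ℝ) ≠ 0 := Nat.cast_ne_zero.mpr (by omega)
    exact neg_ne_zero.mpr (by positivity)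
  have hωdne : eval t₀ (derivative ω) ≠ 0 := by
    rw [hωd]; exact Finset.prod_ne_zero_iff.mpr hfac
  have hcardIcc : (Finset.Icc 1 k).card = k := by rw [Nat.card_Icc]; omega
  have hωdabs : |eval t₀ (derivative ω)| = ((Nat.factorial k : ℕ) : ℝ) ^ 2 * h ^ k := by
    rw [hωd, Finset.abs_prod]
    have : ∀ j ∈ Finset.Icc 1 k, |(-((j : ℝ) ^ 2 * h))| = (j : ℝ) ^ 2 * h := by
      intro j hj
      have hj1 : 1 ≤ j := (Finset.mem_Icc.mp hj).1
      have hjne : (j : ℝ) ≠ 0 := Nat.cast_ne_zero.mpr (by omega)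
      rw [abs_neg, abs_of_pos (by positivity)]
    rw [Finset.prod_congr rfl this, Finset.prod_mul_distrib, prod_sq_Icc,
      Finset.prod_const, hcardIcc]
  set lam := (derivWithin u I t₀ - eval t₀ (derivative p)) / eval t₀ (derivative ω) with hlam
  set q := p + C lam * ω with hq
  set φ := u - (fun t => eval t q) with hφ
  have hu' : ContDiffOn ℝ ((k + 1 : ℕ)) u I := by exact_mod_cast hu
  have hφC : ContDiffOn ℝ ((k + 1 : ℕ)) φ I := hu'.sub (contDiff_polyeval q _).contDiffOn
  have hφzero : ∀ i ∈ Finset.range (k + 1), φ (v i) = 0 := by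
    intro i hi
    simp only [hφ, Pi.sub_apply, hq, eval_add, eval_mul, eval_C, hpeval i hi, hωzero i hi,
      mul_zero, add_zero, sub_self]
  have hqd : eval t₀ (derivative q) = eval t₀ (derivative p) + lam * eval t₀ (derivative ω) := by
    rw [hq, derivative_add, derivative_C_mul, eval_add, eval_mul, eval_C]
  have hφd0 : derivWithin φ I t₀ = 0 := by
    have hut : DifferentiableWithinAt ℝ u I t₀ :=
      (hu'.differentiableOn (by simp)) t₀ ht₀I
    have hqt : DifferentiableWithinAt ℝ (fun t => eval t q) I t₀ :=
      (q.differentiable.differentiableAt).differentiableWithinAt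
    rw [hφ, show (u - fun t => eval t q) = (fun y => u y - eval y q) from rfl,
      derivWithin_fun_sub hut hqt,
      Polynomial.derivWithin q (hUD.uniqueDiffWithinAt ht₀I), hqd, hlam,
      div_mul_cancel₀ _ hωdne]
    ring
  have hv0' : v 0 = t₀ := by simp [hv]
  have hcont : ContinuousOn φ I := hφC.continuousOn
  have key : ∀ i : ℕ, ∃ x, i < k →
      x ∈ Set.Ioo (v i) (v (i + 1)) ∧ iteratedDerivWithin 1 φ I x = 0 := by
    intro i
    by_cases hi : i < k
    · have h1 : v i < v (i + 1) := hmono (by omega)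
      have hsub : Set.Icc (v i) (v (i + 1)) ⊆ I :=
        Set.Icc_subset_Icc (hvmem i (by omega)).1 (hvmem (i + 1) (by omega)).2
      obtain ⟨c, hcIoo, hc0⟩ := exists_deriv_eq_zero h1 (hcont.mono hsub)
        (by rw [hφzero i (Finset.mem_range.mpr (by omega)),
          hφzero (i + 1) (Finset.mem_range.mpr (by omega))])
      refine ⟨c, fun _ => ⟨hcIoo, ?_⟩⟩
      have hcI : I ∈ nhds c := Icc_mem_nhds
        (lt_of_le_of_lt (hvmem i (by omega)).1 hcIoo.1)
        (lt_of_lt_of_le hcIoo.2 (hvmem (i + 1) (by omega)).2)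
      rw [iteratedDerivWithin_one,
        derivWithin_of_mem_nhds hcI, hc0]
    · exact ⟨0, fun hcon => absurd hcon hi⟩
  choose c hc using key
  set z : ℕ → ℝ := fun n => if n = 0 then t₀ else c (n - 1) with hz
  have hzord : ∀ i, i < k → z i < z (i + 1) := by
    intro i hi
    rcases Nat.eq_zero_or_pos i with rfl | hipos
    · have h1 := (hc 0 hi).1.1
      simp only [hz, if_pos rfl, if_neg (by omega : ¬(0 + 1 = 0))]
      rw [hv0'] at h1
      simpa using h1
    · have h1 := (hc (i - 1) (by omega)).1.2
      have h2 := (hc i hi).1.1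
      rw [show i - 1 + 1 = i by omega] at h1
      simp only [hz, if_neg (by omega : ¬(i = 0)), if_neg (by omega : ¬(i + 1 = 0)),
        show i + 1 - 1 = i by omega]
      exact lt_trans h1 h2
  have hzmem : ∀ i, i ≤ k → z i ∈ I := by
    intro i hi
    rcases Nat.eq_zero_or_pos i with rfl | hipos
    · simpa [hz] using ht₀I
    · have h1 := (hc (i - 1) (by omega)).1.1
      have h2 := (hc (i - 1) (by omega)).1.2
      rw [show i - 1 + 1 = i by omega] at h2
      simp only [hz, if_neg (by omega : ¬(i = 0))]
      exact ⟨le_trans (hvmem (i - 1) (by omega)).1 h1.le, le_trans h2.le (hvmem i hi).2⟩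
  have hzzero : ∀ i, i ≤ k → iteratedDerivWithin 1 φ I (z i) = 0 := by
    intro i hi
    rcases Nat.eq_zero_or_pos i with rfl | hipos
    · simp only [hz, if_pos rfl]
      rw [iteratedDerivWithin_one]
      exact hφd0
    · simp only [hz, if_neg (by omega : ¬(i = 0))]
      exact (hc (i - 1) (by omega)).2
  obtain ⟨ξ, hξI, hξ0⟩ := iter_rolle hT φ k 1 z
    (by rw [show 1 + k = k + 1 from Nat.add_comm 1 k]; exact hφC) hzord hzmem hzzero
  rw [show 1 + k = k + 1 from Nat.add_comm 1 k] at hξ0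
  have hqiter : derivative^[k + 1] q = C (lam * ((Nat.factorial (k + 1) : ℕ) : ℝ)) := by
    have hpdeg : p.natDegree < k + 1 := by
      rcases eq_or_ne p 0 with hp0 | hp0
      · rw [hp0, natDegree_zero]; omega
      · refine (natDegree_lt_iff_degree_lt hp0).mpr ?_
        have := Lagrange.degree_interpolate_lt (fun j => u (v j)) hinj
        rwa [Finset.card_range] at this
    have hωmonic : ω.Monic := monic_prod_of_monic _ _ fun j _ => monic_X_sub_C (v j)
    have hωdeg : ω.natDegree = k + 1 := by
      rw [hω, natDegree_prod_of_monic _ _ fun j _ => monic_X_sub_C (v j)]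
      simp [natDegree_X_sub_C]
    rw [hq, iter_deriv_add, iterate_derivative_eq_zero hpdeg, iterate_derivative_C_mul,
      iterate_derivative_monic hωmonic hωdeg, zero_add, ← C_mul]
  have hval : iteratedDerivWithin (k + 1) u I ξ = lam * ((Nat.factorial (k + 1) : ℕ) : ℝ) := by
    have hsub2 : iteratedDerivWithin (k + 1) φ I ξ
        = iteratedDerivWithin (k + 1) u I ξ
          - iteratedDerivWithin (k + 1) (fun t => eval t q) I ξ := by
      rw [hφ]
      exact iteratedDerivWithin_sub hξI hUD (hu' ξ hξI) ((contDiff_polyeval q _).contDiffOn ξ hξI)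
    rw [hsub2, iteratedDerivWithin_polyeval q hUD (k + 1) ξ hξI, hqiter, eval_C] at hξ0
    linarith
  have hfacpos : (0 : ℝ) < ((Nat.factorial (k + 1) : ℕ) : ℝ) := by
    exact_mod_cast Nat.factorial_pos (k + 1)
  have hlam_bound : |lam| ≤ M / ((Nat.factorial (k + 1) : ℕ) : ℝ) := by
    have hMξ := hM ξ hξI
    rw [hval, abs_mul, abs_of_pos hfacpos] at hMξ
    rw [le_div_iff₀ hfacpos]
    exact hMξ
  have herr : derivWithin u I t₀
      - (1 / h) * ∑ i ∈ Finset.range (k + 1), betaCoef k i * u (t₀ + ((i : ℝ) ^ 2) * h)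
      = lam * eval t₀ (derivative ω) := by
    simp_rw [hveq]
    rw [hsum, hlam, div_mul_cancel₀ _ hωdne]
  rw [herr, abs_mul, hωdabs]
  have hstep : |lam| * (((Nat.factorial k : ℕ) : ℝ) ^ 2 * h ^ k)
      ≤ (M / ((Nat.factorial (k + 1) : ℕ) : ℝ)) * (((Nat.factorial k : ℕ) : ℝ) ^ 2 * h ^ k) :=
    mul_le_mul_of_nonneg_right hlam_bound (by positivity)
  refine le_trans hstep (le_of_eq ?_)
  ring
end

section
/- For every integer k ≥ 1, the coefficients β_i^k satisfy ∑_{i=0}^k β_i^k = 0 and ∑_{i=1}^k i²·β_i^k = 1; consequently λ = 1 is a simple root of the characteristic polynomial P_β^k(λ) = ∑_{i=0}^k β_i^k λ^{k²−i²} (that is, P_β^k(1) = 0 and (P_β^k)′(1) = −1 ≠ 0), where β_0^k = −∑_{j=1}^k 1/j² and β_i^k = (−1)^{k−1}·(k!)² / (i² · ∏_{0≤j≤k, j≠i} (i² − j²)) for 1 ≤ i ≤ k. -/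
/-- The characteristic polynomial `P_β^k(λ) = ∑_{i=0}^k β_i^k λ^(k²-i²)` of the
non-equidistant multi-step scheme. -/
noncomputable def charPolyBeta (k : ℕ) : Polynomial ℝ :=
  ∑ i ∈ Finset.range (k + 1), Polynomial.C (betaCoef k i) * Polynomial.X ^ (k ^ 2 - i ^ 2)

open Polynomial Finset

noncomputable def vsq : ℕ → ℝ := fun j => (j : ℝ) ^ 2

lemma sq_cast_inj {a b : ℕ} (h : (a:ℝ)^2 = (b:ℝ)^2) : a = b := by
  have : (a : ℝ) = b := by
    have ha : (0:ℝ) ≤ a := Nat.cast_nonneg a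
    have hb : (0:ℝ) ≤ b := Nat.cast_nonneg b
    nlinarith [sq_nonneg ((a:ℝ) - b), sq_nonneg ((a:ℝ) + b)]
  exact_mod_cast this

lemma vsq_injOn (s : Finset ℕ) : Set.InjOn vsq s := fun a _ b _ h => sq_cast_inj h

lemma polyDerivFinsetProd (s : Finset ℕ) (f : ℕ → ℝ[X]) :
    Polynomial.derivative (∏ j ∈ s, f j) =
      ∑ m ∈ s, (∏ j ∈ s.erase m, f j) * Polynomial.derivative (f m) := by
  classical
  induction s using Finset.induction_on with
  | empty => simp
  | insert a s hx ih =>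
    rw [Finset.prod_insert hx, derivative_mul, Finset.sum_insert hx,
      Finset.erase_insert hx, ih, Finset.mul_sum]
    congr 1
    · ring
    · apply Finset.sum_congr rfl
      intro m hm
      rw [Finset.erase_insert_of_ne (by rintro rfl; exact hx hm),
        Finset.prod_insert (fun h => hx (Finset.mem_of_mem_erase h))]
      ring

lemma erase_zero_range (k : ℕ) : (Finset.range (k+1)).erase 0 = Finset.Icc 1 k := by
  ext j; simp [Finset.mem_erase, Finset.mem_range, Finset.mem_Icc]; omega

lemma prod_Icc_cast (k : ℕ) : ∏ j ∈ Finset.Icc 1 k, (j : ℝ) = (Nat.factorial k : ℝ) := by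
  induction k with
  | zero => simp
  | succ n ih =>
    rw [Finset.prod_Icc_succ_top (by omega), ih, Nat.factorial_succ]
    push_cast; ring

lemma deriv_basisDivisor (x y : ℝ) :
    Polynomial.derivative (Lagrange.basisDivisor x y) = Polynomial.C (x - y)⁻¹ := by
  simp [Lagrange.basisDivisor]

lemma eval_zero_basisDivisor (x y : ℝ) :
    Polynomial.eval 0 (Lagrange.basisDivisor x y) = (x - y)⁻¹ * (0 - y) := by
  simp [Lagrange.basisDivisor]

lemma beta_eq_deriv_basis (k i : ℕ) (hi : i ∈ Finset.range (k+1)) :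
    (Polynomial.derivative (Lagrange.basis (Finset.range (k+1)) vsq i)).eval 0 = betaCoef k i := by
  rw [Lagrange.basis, polyDerivFinsetProd, Polynomial.eval_finset_sum]
  simp only [Polynomial.eval_mul, Polynomial.eval_prod, deriv_basisDivisor,
    eval_zero_basisDivisor, Polynomial.eval_C]
  by_cases h0 : i = 0
  · subst h0
    simp only [betaCoef, if_pos]
    rw [erase_zero_range]
    have hterm : ∀ m ∈ Finset.Icc 1 k,
        (∏ j ∈ (Finset.Icc 1 k).erase m, (vsq 0 - vsq j)⁻¹ * (0 - vsq j)) * (vsq 0 - vsq m)⁻¹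
          = -(1 / (m:ℝ)^2) := by
      intro m hm
      have hm1 : 1 ≤ m := (Finset.mem_Icc.mp hm).1
      have hprod : (∏ j ∈ (Finset.Icc 1 k).erase m,
          (vsq 0 - vsq j)⁻¹ * (0 - vsq j)) = 1 := by
        apply Finset.prod_eq_one
        intro j hj
        have hj1 : 1 ≤ j := (Finset.mem_Icc.mp (Finset.mem_of_mem_erase hj)).1
        have hjne : ((j:ℝ)^2) ≠ 0 := pow_ne_zero _ (Nat.cast_ne_zero.mpr (by omega))
        simp only [vsq, Nat.cast_zero]
        rw [zero_pow (by norm_num), zero_sub]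
        exact inv_mul_cancel₀ (neg_ne_zero.mpr hjne)
      rw [hprod, one_mul]
      have hmne : ((m:ℝ)^2) ≠ 0 := pow_ne_zero _ (Nat.cast_ne_zero.mpr (by omega))
      simp only [vsq, Nat.cast_zero]
      rw [zero_pow (by norm_num), zero_sub, inv_neg, one_div]
    rw [Finset.sum_congr rfl hterm]
    simp
  · -- i ≠ 0
    have hik : i ≤ k := Nat.lt_succ_iff.mp (Finset.mem_range.mp hi)
    have hi1 : 1 ≤ i := Nat.one_le_iff_ne_zero.mpr h0
    have h0mem : (0:ℕ) ∈ (Finset.range (k+1)).erase i :=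
      Finset.mem_erase.mpr ⟨Ne.symm h0, Finset.mem_range.mpr (by omega)⟩
    have hside : ∀ m ∈ (Finset.range (k+1)).erase i, m ≠ 0 →
        (∏ j ∈ ((Finset.range (k+1)).erase i).erase m,
          (vsq i - vsq j)⁻¹ * (0 - vsq j)) * (vsq i - vsq m)⁻¹ = 0 := by
      intro m hm hm0
      apply mul_eq_zero_of_left
      apply Finset.prod_eq_zero (i := 0)
        (Finset.mem_erase.mpr ⟨Ne.symm hm0, h0mem⟩)
      simp [vsq]
    rw [Finset.sum_eq_single_of_mem 0 h0mem hside]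
    -- main term
    have hA : ((Finset.range (k+1)).erase i).erase 0 = (Finset.Icc 1 k).erase i := by
      rw [Finset.erase_right_comm, erase_zero_range]
    have himem : i ∈ Finset.Icc 1 k := Finset.mem_Icc.mpr ⟨hi1, hik⟩
    have hcard : ((Finset.Icc 1 k).erase i).card = k - 1 := by
      rw [Finset.card_erase_of_mem himem, Nat.card_Icc]
      omega
    have hfact : (i:ℝ) * ∏ j ∈ (Finset.Icc 1 k).erase i, (j:ℝ) = (Nat.factorial k : ℝ) := by
      rw [Finset.mul_prod_erase _ _ himem, prod_Icc_cast]
    have hiR : (i:ℝ) ≠ 0 := Nat.cast_ne_zero.mpr h0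
    have hP : (∏ j ∈ (Finset.Icc 1 k).erase i, ((i:ℝ)^2 - (j:ℝ)^2)) ≠ 0 := by
      rw [Finset.prod_ne_zero_iff]
      intro j hj
      exact sub_ne_zero.mpr (fun h => (Finset.mem_erase.mp hj).1 (sq_cast_inj h.symm))
    have hsplit : ∏ j ∈ (Finset.range (k+1)).erase i, ((i:ℝ)^2 - (j:ℝ)^2)
        = (i:ℝ)^2 * ∏ j ∈ (Finset.Icc 1 k).erase i, ((i:ℝ)^2 - (j:ℝ)^2) := by
      rw [← Finset.mul_prod_erase _ (fun j : ℕ => (i:ℝ)^2 - (j:ℝ)^2) h0mem, hA]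
      norm_num
    simp only [betaCoef, if_neg h0]
    rw [hsplit, hA]
    simp only [vsq, Nat.cast_zero]
    rw [zero_pow (by norm_num), sub_zero]
    have hneg : ∀ j : ℕ, ((i:ℝ)^2 - (j:ℝ)^2)⁻¹ * (0 - (j:ℝ)^2)
        = ((i:ℝ)^2 - (j:ℝ)^2)⁻¹ * ((-1) * (j:ℝ)^2) := by intro j; ring_nf
    rw [Finset.prod_congr rfl (fun j _ => hneg j), Finset.prod_mul_distrib,
      Finset.prod_mul_distrib, Finset.prod_const, Finset.prod_inv_distrib, hcard,
      Finset.prod_pow, ← hfact]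
    field_simp

lemma sum_beta_eq_zero (k : ℕ) (hk : 1 ≤ k) :
    ∑ i ∈ Finset.range (k+1), betaCoef k i = 0 := by
  have h1 := Lagrange.sum_basis (v := vsq) (vsq_injOn _)
    (⟨0, Finset.mem_range.mpr (by omega)⟩ : (Finset.range (k+1)).Nonempty)
  calc ∑ i ∈ Finset.range (k+1), betaCoef k i
      = ∑ i ∈ Finset.range (k+1),
          (Polynomial.derivative (Lagrange.basis (Finset.range (k+1)) vsq i)).eval 0 :=
        (Finset.sum_congr rfl (fun i hi => (beta_eq_deriv_basis k i hi).symm))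
    _ = (Polynomial.derivative
          (∑ i ∈ Finset.range (k+1), Lagrange.basis (Finset.range (k+1)) vsq i)).eval 0 := by
        rw [map_sum, Polynomial.eval_finset_sum]
    _ = 0 := by rw [h1]; simp

lemma sum_sq_beta_eq_one (k : ℕ) (hk : 1 ≤ k) :
    ∑ i ∈ Finset.range (k+1), (i:ℝ)^2 * betaCoef k i = 1 := by
  have hX : (Polynomial.X : ℝ[X]) = Lagrange.interpolate (Finset.range (k+1)) vsq
      (fun i => Polynomial.eval (vsq i) Polynomial.X) := by
    apply Lagrange.eq_interpolate (vsq_injOn _)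
    rw [Polynomial.degree_X, Finset.card_range]
    exact_mod_cast Nat.lt_succ_of_le hk
  have h2 : (1:ℝ) = (Polynomial.derivative (Polynomial.X : ℝ[X])).eval 0 := by simp
  rw [h2, hX, Lagrange.interpolate_apply, map_sum, Polynomial.eval_finset_sum]
  apply Finset.sum_congr rfl
  intro i hi
  rw [Polynomial.derivative_C_mul, Polynomial.eval_mul, Polynomial.eval_C,
    beta_eq_deriv_basis k i hi]
  simp [vsq]


/-- `∑_{i=0}^k β_i^k = 0` and `∑_{i=1}^k i²·β_i^k = 1`; consequently `λ = 1` is a simple root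
of `P_β^k`: `P_β^k(1) = 0` and `(P_β^k)′(1) = −1 ≠ 0`. -/
theorem beta_consistency_and_simple_root_one (k : ℕ) (hk : 1 ≤ k) :
    (∑ i ∈ Finset.range (k + 1), betaCoef k i = 0) ∧
    (∑ i ∈ Finset.Icc 1 k, (i : ℝ) ^ 2 * betaCoef k i = 1) ∧
    (charPolyBeta k).eval 1 = 0 ∧
    (Polynomial.derivative (charPolyBeta k)).eval 1 = -1 := by
  have h1 := sum_beta_eq_zero k hk
  have h2 := sum_sq_beta_eq_one k hk
  have h2' : ∑ i ∈ Finset.Icc 1 k, (i : ℝ) ^ 2 * betaCoef k i = 1 := by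
    rw [← Finset.add_sum_erase _ _ (Finset.mem_range.mpr (show 0 < k+1 by omega)),
      erase_zero_range] at h2
    simpa using h2
  refine ⟨h1, h2', ?_, ?_⟩
  · rw [charPolyBeta, Polynomial.eval_finset_sum]
    simpa using h1
  · rw [charPolyBeta, map_sum, Polynomial.eval_finset_sum]
    have hterm : ∀ i ∈ Finset.range (k+1),
        (Polynomial.derivative (Polynomial.C (betaCoef k i) *
          Polynomial.X ^ (k^2 - i^2))).eval 1
          = betaCoef k i * ((k:ℝ)^2 - (i:ℝ)^2) := by
      intro i hi
      have hik : i ≤ k := Nat.lt_succ_iff.mp (Finset.mem_range.mp hi)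
      have hsq : i^2 ≤ k^2 := Nat.pow_le_pow_left hik 2
      rw [Polynomial.derivative_C_mul, Polynomial.derivative_X_pow]
      simp only [Polynomial.eval_mul, Polynomial.eval_C, Polynomial.eval_pow,
        Polynomial.eval_natCast, Polynomial.eval_X, one_pow, mul_one]
      rw [Nat.cast_sub hsq]
      push_cast
      ring
    rw [Finset.sum_congr rfl hterm]
    have : ∑ i ∈ Finset.range (k+1), betaCoef k i * ((k:ℝ)^2 - (i:ℝ)^2)
        = (k:ℝ)^2 * (∑ i ∈ Finset.range (k+1), betaCoef k i)
          - ∑ i ∈ Finset.range (k+1), (i:ℝ)^2 * betaCoef k i := by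
      rw [Finset.mul_sum, ← Finset.sum_sub_distrib]
      exact Finset.sum_congr rfl (fun i _ => by ring)
    rw [this, h1, h2]
    ring
end
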